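/- Fix n ≥ 2 and let G = ([2n], [2n+1], E) be the bipartite graph with E = {(j,j), (n+j,j), (j,n+1+j), (n+j,n+1+j), (j,n+1), (n+j,n+1) : j ∈ [n]}. Let H be the conjunction of all AMO clauses of G-PHP, the clauses ALO_j for j ∈ [n], and the clause ALO_{n+1}, and let H' be H restricted by p_{n,2n+1} = 0, p_{2n,2n+1} = 0 and p_{2n,n+1} = 1. Then an assignment a to the variables {p_{j,n+1+j}, p_{n+j,n+1+j} : j ∈ [n−1]} extends to a satisfying assignment of H' if and only if a extends (over the variables p_{j,j}, p_{n+j,j}, j ∈ [n]) to a satisfying assignment of the formula ¬p_{2n,n} ∧ (p_{n,n} ∨ p_{2n,n}) ∧ ⋀_{j∈[n−1]} [(¬p_{j,j} ∨ ¬p_{j,n+1+j}) ∧ (¬p_{n+j,j} ∨ ¬p_{n+j,n+1+j}) ∧ (p_{j,j} ∨ p_{n+j,j})]. -/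

import Mathlib

/-- Pure-literal elimination step of Theorem 2: an assignment `a` to the variables
`p_{j,n+1+j}, p_{n+j,n+1+j}` (`j ∈ [n-1]`) extends to a satisfying assignment of the
restricted formula `H'` (all `AMO` clauses of `G`-PHP, `ALO_j` for `j ∈ [n]` and
`ALO_{n+1}`, restricted by `p_{n,2n+1} = 0`, `p_{2n,2n+1} = 0`, `p_{2n,n+1} = 1`)
iff it extends (over the variables `p_{j,j}, p_{n+j,j}`, `j ∈ [n]`) to a satisfying
assignment of
`¬p_{2n,n} ∧ (p_{n,n} ∨ p_{2n,n}) ∧ ⋀_{j∈[n-1]} [(¬p_{j,j} ∨ ¬p_{j,n+1+j}) ∧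
(¬p_{n+j,j} ∨ ¬p_{n+j,n+1+j}) ∧ (p_{j,j} ∨ p_{n+j,j})]`. -/
theorem pure_literal_step (n : ℕ) (hn : 2 ≤ n) (a : ℕ → ℕ → Bool) :
    (∃ b : ℕ → ℕ → Bool,
      (∀ j : ℕ, 1 ≤ j → j ≤ n - 1 →
        b j (n + 1 + j) = a j (n + 1 + j) ∧ b (n + j) (n + 1 + j) = a (n + j) (n + 1 + j)) ∧
      b n (2 * n + 1) = false ∧ b (2 * n) (2 * n + 1) = false ∧ b (2 * n) (n + 1) = true ∧
      (∀ j : ℕ, 1 ≤ j → j ≤ n → ∀ i ∈ ({j, n + j} : Set ℕ),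
        ¬ (b i j = true ∧ b i (n + 1 + j) = true) ∧
        ¬ (b i j = true ∧ b i (n + 1) = true) ∧
        ¬ (b i (n + 1) = true ∧ b i (n + 1 + j) = true)) ∧
      (∀ j : ℕ, 1 ≤ j → j ≤ n → (b j j = true ∨ b (n + j) j = true)) ∧
      (∃ j : ℕ, 1 ≤ j ∧ j ≤ n ∧ (b j (n + 1) = true ∨ b (n + j) (n + 1) = true)))
    ↔
    (∃ b : ℕ → ℕ → Bool,
      (∀ j : ℕ, 1 ≤ j → j ≤ n - 1 →
        b j (n + 1 + j) = a j (n + 1 + j) ∧ b (n + j) (n + 1 + j) = a (n + j) (n + 1 + j)) ∧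
      b (2 * n) n = false ∧ (b n n = true ∨ b (2 * n) n = true) ∧
      (∀ j : ℕ, 1 ≤ j → j ≤ n - 1 →
        ¬ (b j j = true ∧ b j (n + 1 + j) = true) ∧
        ¬ (b (n + j) j = true ∧ b (n + j) (n + 1 + j) = true) ∧
        (b j j = true ∨ b (n + j) j = true))) := by
  constructor
  · rintro ⟨b, hag, h1, h2, h3, hamo, halo, -⟩
    refine ⟨b, hag, ?_, by simpa [two_mul] using halo n (by omega) le_rfl, ?_⟩
    · have hm : (2 * n : ℕ) ∈ ({n, n + n} : Set ℕ) := by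
        right; simp [two_mul]
      have := (hamo n (by omega) le_rfl (2 * n) hm).2.1
      cases hb : b (2 * n) n with
      | false => rfl
      | true => exact absurd ⟨hb, h3⟩ this
    · intro j hj1 hj2
      have hmj : (j : ℕ) ∈ ({j, n + j} : Set ℕ) := Or.inl rfl
      have hmn : (n + j : ℕ) ∈ ({j, n + j} : Set ℕ) := Or.inr rfl
      exact ⟨(hamo j hj1 (by omega) j hmj).1, (hamo j hj1 (by omega) (n + j) hmn).1,
        halo j hj1 (by omega)⟩
  · rintro ⟨b, hag, h0, h1, hcl⟩
    refine ⟨fun i j => if j = n + 1 then decide (i = 2 * n)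
        else if j = 2 * n + 1 then false else b i j, ?_, ?_, ?_, ?_, ?_, ?_, ?_⟩
    · intro j hj1 hj2
      have e1 : n + 1 + j ≠ n + 1 := by omega
      have e2 : n + 1 + j ≠ 2 * n + 1 := by omega
      simp only [if_neg e1, if_neg e2]
      exact hag j hj1 hj2
    · have e1 : 2 * n + 1 ≠ n + 1 := by omega
      simp [e1]; omega
    · have e1 : 2 * n + 1 ≠ n + 1 := by omega
      simp [e1]; omega
    · simp
    · intro j hj1 hj2 i hi
      have hi' : i = j ∨ i = n + j := hi
      have ej1 : j ≠ n + 1 := by omega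
      have ej2 : j ≠ 2 * n + 1 := by omega
      refine ⟨?_, ?_, ?_⟩
      · by_cases h : j = n
        · subst h
          have e3 : j + 1 + j ≠ j + 1 := by omega
          have e4 : j + 1 + j = 2 * j + 1 := by omega
          simp [e3, e4]
          omega
        · have hlt : j < n := by omega
          have e3 : n + 1 + j ≠ n + 1 := by omega
          have e4 : n + 1 + j ≠ 2 * n + 1 := by omega
          simp only [if_neg ej1, if_neg ej2, if_neg e3, if_neg e4]
          rcases hi' with rfl | rfl
          · exact (hcl _ hj1 (by omega)).1
          · exact (hcl _ hj1 (by omega)).2.1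
      · simp only [if_pos rfl, if_neg ej1, if_neg ej2]
        rintro ⟨hb, hd⟩
        have hi2 : i = 2 * n := by simpa using hd
        rcases hi' with rfl | rfl
        · omega
        · have hjn : j = n := by omega
          rw [hi2, hjn, h0] at hb
          exact Bool.false_ne_true hb
      · simp only [if_pos rfl]
        rintro ⟨hd, hb⟩
        have hi2 : i = 2 * n := by simpa using hd
        rcases hi' with rfl | rfl
        · omega
        · have hjn : j = n := by omega
          rw [hjn] at hb
          have e4 : n + 1 + n = 2 * n + 1 := by omega
          have e3 : n + 1 + n ≠ n + 1 := by omega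
          rw [if_neg e3, if_pos e4] at hb
          exact Bool.false_ne_true hb
    · intro j hj1 hj2
      have ej1 : j ≠ n + 1 := by omega
      have ej2 : j ≠ 2 * n + 1 := by omega
      simp only [if_neg ej1, if_neg ej2]
      by_cases h : j = n
      · subst h
        rcases h1 with h | h
        · exact Or.inl h
        · rw [h0] at h; exact absurd h Bool.false_ne_true
      · have hlt : j < n := by omega
        exact (hcl j hj1 (by omega)).2.2
    · refine ⟨n, by omega, le_rfl, Or.inr ?_⟩
      simp [two_mul]
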